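/- Let p be a prime and let m be an integer with m > 1. Let q be a prime power with q ≥ p^m and gcd(q−1, p) = 1. If p^m − 3p ≥ 1, then there exists a strictly optimal ((q−1)p(p^m−1), p^{m−1}, p; p^m q)-FHS set; that is, there exists a set S of M = p^{m−1} FHSs of length n = (q−1)p(p^m−1) over an alphabet of size l = p^m q such that H(S;L) ≤ ⌈Lp/n⌉ for every L with 1 ≤ L ≤ n, where p = ⌈(2InM−(I+1)Il)/((nM−1)M)⌉ with I = ⌊nM/l⌋. -/

import Mathlib

/-- Partial Hamming correlation `H_{X,Y}(τ; j | L)` of the frequency hopping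
sequences `X, Y : ZMod n → F` for shift `τ`, window start `j` and window length `L`. -/
def partialHC {n : ℕ} {F : Type*} [DecidableEq F] (X Y : ZMod n → F)
    (τ j : ZMod n) (L : ℕ) : ℕ :=
  ∑ t ∈ Finset.range L, if X (j + (t : ZMod n)) = Y (j + (t : ZMod n) + τ) then 1 else 0

/-- The Peng–Fan bound value `⌈(2InM − (I+1)Il) / ((nM−1)M)⌉` where `I = ⌊nM/l⌋`. -/
def pengFanBound (n M l : ℕ) : ℤ :=
  ⌈(((2 * (n * M / l) * n * M : ℕ) : ℚ) - (((n * M / l + 1) * (n * M / l) * l : ℕ) : ℚ))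
    / ((((n * M : ℕ) : ℚ) - 1) * (M : ℚ))⌉

/-- There is a strictly optimal `(n, M, λ; l)`-FHS set (with respect to the Peng–Fan
bound): `λ` equals the Peng–Fan bound value and there are `M` pairwise distinct FHSs of
length `n` over an alphabet of size `l` whose maximum nontrivial partial Hamming
correlation satisfies `H(S; L) ≤ ⌈Lλ/n⌉` for every window length `1 ≤ L ≤ n`. -/
def IsStrictlyOptimalFHSSet (n M lam l : ℕ) : Prop :=
  (lam : ℤ) = pengFanBound n M l ∧
  ∃ X : Fin M → (ZMod n → Fin l),
    (∀ a b : Fin M, a ≠ b → X a ≠ X b) ∧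
    ∀ L : ℕ, 1 ≤ L → L ≤ n →
      (∀ a : Fin M, ∀ τ : ZMod n, τ ≠ 0 → ∀ j : ZMod n,
        (partialHC (X a) (X a) τ j L : ℤ) ≤ ⌈((L * lam : ℕ) : ℚ) / (n : ℚ)⌉) ∧
      (∀ a b : Fin M, a ≠ b → ∀ τ j : ZMod n,
        (partialHC (X a) (X b) τ j L : ℤ) ≤ ⌈((L * lam : ℕ) : ℚ) / (n : ℚ)⌉)

/-- carry lemma for the `div A` slice of addition mod `A*Q`. -/
lemma FHSaux.slice_mod (A Q x y : ℕ) (hA : 0 < A) (hx : x < A*Q) (hy : y < A*Q) :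
    (x + y) % (A*Q) / A ≡ x/A + y/A + (if A ≤ x % A + y % A then 1 else 0) [MOD Q] := by
  rcases lt_or_ge (x + y) (A*Q) with h | h
  · rw [Nat.mod_eq_of_lt h, Nat.add_div hA]
  · have h2 : (x + y) % (A*Q) = x + y - A*Q := by
      rw [Nat.mod_eq_sub_mod h, Nat.mod_eq_of_lt (by omega)]
    rw [h2]
    have hz : x + y - A*Q + A*Q = x + y := by omega
    have h3 : (x + y - A*Q + A*Q) / A = (x + y - A*Q) / A + Q := by
      rw [Nat.add_mul_div_left _ _ hA]
    rw [hz, Nat.add_div hA] at h3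
    rw [show x / A + y / A + (if A ≤ x % A + y % A then 1 else 0)
        = (x + y - A*Q) / A + Q from h3]
    simpa [Nat.ModEq] using (Nat.add_mod_right ((x + y - A*Q)/A) Q).symm

lemma FHSaux.count_filter_mod (D L ρ : ℕ) :
    ((Finset.range L).filter (fun t => t % D = ρ)).card ≤ (L-1)/D + 1 := by
  have := Finset.card_le_card_of_injOn (s := (Finset.range L).filter (fun t => t % D = ρ))
    (f := fun t => t / D) (t := Finset.range ((L-1)/D + 1)) ?_ ?_
  · simpa using this
  · intro t ht
    simp only [Finset.mem_coe, Finset.mem_filter, Finset.mem_range] at ht ⊢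
    have : t / D ≤ (L-1)/D := Nat.div_le_div_right (by omega)
    omega
  · intro t₁ h₁ t₂ h₂ h
    simp only [Finset.mem_coe, Finset.mem_filter, Finset.mem_range] at h₁ h₂
    have h' : t₁ / D = t₂ / D := h
    clear h
    have e₁ := Nat.div_add_mod t₁ D
    rw [h'] at e₁
    have e₂ := Nat.div_add_mod t₂ D
    have m₁ : t₁ % D = ρ := h₁.2
    have m₂ : t₂ % D = ρ := h₂.2
    omega

lemma FHSaux.ceil_bound (D L P : ℕ) (hD : 0 < D) (hP : 0 < P) (hL : 1 ≤ L) :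
    (((L-1)/D + 1 : ℕ) : ℤ) ≤ ⌈((L * P : ℕ) : ℚ) / ((D * P : ℕ) : ℚ)⌉ := by
  rw [Int.le_ceil_iff]
  have hDq : (0:ℚ) < D := by exact_mod_cast hD
  have hPq : (0:ℚ) < P := by exact_mod_cast hP
  have h1 : ((L * P : ℕ) : ℚ) / ((D * P : ℕ) : ℚ) = (L:ℚ)/(D:ℚ) := by
    push_cast
    field_simp
  rw [h1]
  have h2 : ((L-1)/D) * D < L := lt_of_le_of_lt (Nat.div_mul_le_self _ _) (by omega)
  have h3 : (((L-1)/D : ℕ) : ℚ) < (L:ℚ)/(D:ℚ) := by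
    rw [lt_div_iff₀ hDq]
    exact_mod_cast h2
  have h4 : (((((L-1)/D + 1 : ℕ) : ℤ)) : ℚ) = (((L-1)/D : ℕ) : ℚ) + 1 := by norm_cast
  rw [h4]
  linarith

lemma FHSaux.natCast_mod_dvd (pp N x : ℕ) (h : pp ∣ N) :
    ((x % N : ℕ) : ZMod pp) = (x : ZMod pp) := by
  conv_rhs => rw [← Nat.mod_add_div x N]
  push_cast
  rw [(ZMod.natCast_eq_zero_iff N pp).mpr h]
  ring

lemma FHSaux.modeq_eq (a b n : ℕ) (h : a ≡ b [MOD n]) (ha : a < n) (hb : b < n) : a = b := by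
  rwa [Nat.ModEq, Nat.mod_eq_of_lt ha, Nat.mod_eq_of_lt hb] at h

/-- The Peng–Fan bound computation. -/
lemma FHSaux.peng_fan_eq (p m q : ℕ) (hp2 : 2 ≤ p) (hm : 1 ≤ m)
    (hqp : p ^ m ≤ q) (hcond : 3 * p + 1 ≤ p ^ m) :
    (p : ℤ) = pengFanBound ((q - 1) * p * (p ^ m - 1)) (p ^ (m - 1)) (p ^ m * q) := by
  set P := p ^ m with hPdef
  set M := p ^ (m - 1) with hMdef
  set n := (q - 1) * p * (P - 1) with hndef
  set l := P * q with hldef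
  have hP7 : 7 ≤ P := le_trans (by omega) hcond
  have hq7 : 7 ≤ q := le_trans hP7 hqp
  have hPM : p * M = P := by
    rw [hMdef, hPdef, ← pow_succ']
    congr 1
    omega
  have hM1 : 1 ≤ M := Nat.one_le_iff_ne_zero.mpr (pow_ne_zero _ (by omega))
  have hnM : n * M = (q - 1) * (P - 1) * P := by
    rw [hndef, show (q-1)*p*(P-1)*M = (q-1)*(P-1)*(p*M) from by ring, hPM]
  have hI : n * M / l = P - 2 := by
    rw [hnM, hldef]
    rw [show (q-1)*(P-1)*P = ((q-1)*(P-1))*P from by ring, show P*q = q*P from by ring]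
    rw [Nat.mul_div_mul_right _ _ (show 0 < P by omega)]
    have hkey : (q-1)*(P-1) = q*(P-2) + (q+1-P) := by
      have e1 : 1 ≤ q := by omega
      have e2 : 1 ≤ P := by omega
      have e3 : 2 ≤ P := by omega
      have e4 : P ≤ q + 1 := by omega
      zify [e1, e2, e3, e4]
      ring
    rw [hkey, Nat.mul_add_div (by omega : 0 < q), Nat.div_eq_of_lt (by omega : q+1-P < q),
      Nat.add_zero]
  rw [pengFanBound, hI]
  have hb1 : 2 * (P-2) * n * M = 2*(P-2)*((q-1)*(P-1)*P) := by
    rw [show 2*(P-2)*n*M = 2*(P-2)*(n*M) from by ring, hnM]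
  have hb2 : (P-2+1)*(P-2)*l = (P-1)*(P-2)*(P*q) := by
    rw [hldef, show P-2+1 = P-1 from by omega]
  rw [hb1, hb2, hnM]
  -- cast everything to ℚ
  have e1 : 1 ≤ q := by omega
  have e2 : 1 ≤ P := by omega
  have e3 : 2 ≤ P := by omega
  have hq7' : (7:ℚ) ≤ (q:ℚ) := by exact_mod_cast hq7
  have hP7' : (7:ℚ) ≤ (P:ℚ) := by exact_mod_cast hP7
  have hp2' : (2:ℚ) ≤ (p:ℚ) := by exact_mod_cast hp2
  have hM1' : (1:ℚ) ≤ (M:ℚ) := by exact_mod_cast hM1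
  have hqp' : (P:ℚ) ≤ (q:ℚ) := by exact_mod_cast hqp
  have hcond' : 3*(p:ℚ) + 1 ≤ (P:ℚ) := by exact_mod_cast hcond
  have hPMQ : (p:ℚ) * (M:ℚ) = (P:ℚ) := by exact_mod_cast hPM
  have hden : (0:ℚ) < (((q - 1) * (P - 1) * P : ℕ) : ℚ) - 1 := by
    have h36 : 6*6*7 ≤ (q-1)*(P-1)*P :=
      Nat.mul_le_mul (Nat.mul_le_mul (by omega) (by omega)) (by omega)
    have : (252:ℚ) ≤ (((q - 1) * (P - 1) * P : ℕ) : ℚ) := by exact_mod_cast h36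
    linarith
  have hden2 : (0:ℚ) < ((((q - 1) * (P - 1) * P : ℕ) : ℚ) - 1) * (M:ℚ) := by
    apply mul_pos hden
    linarith
  symm
  rw [Int.ceil_eq_iff]
  have claimB : ((p:ℚ)-1) * (((q:ℚ)-1)*((P:ℚ)-1)*(P:ℚ) - 1)
      < (p:ℚ)*((P:ℚ)-2)*((P:ℚ)-1)*((q:ℚ)-2) := by
    have hidB : (p:ℚ)*((P:ℚ)-2)*((P:ℚ)-1)*((q:ℚ)-2)
        - ((p:ℚ)-1) * (((q:ℚ)-1)*((P:ℚ)-1)*(P:ℚ) - 1)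
        = ((P:ℚ)-1)*((q:ℚ)*((P:ℚ)-2*(p:ℚ)) - (P:ℚ)*((p:ℚ)+1) + 4*(p:ℚ)) + ((p:ℚ)-1) := by
      ring
    have hB : (0:ℚ) ≤ (q:ℚ)*((P:ℚ)-2*(p:ℚ)) - (P:ℚ)*((p:ℚ)+1) + 4*(p:ℚ) := by
      have h1 : (P:ℚ)*((P:ℚ)-2*(p:ℚ)) ≤ (q:ℚ)*((P:ℚ)-2*(p:ℚ)) :=
        mul_le_mul_of_nonneg_right hqp' (by linarith)
      have h2 : (0:ℚ) ≤ (P:ℚ)*((P:ℚ)-3*(p:ℚ)-1) :=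
        mul_nonneg (by linarith) (by linarith)
      have hid2 : (P:ℚ)*((P:ℚ)-2*(p:ℚ)) - (P:ℚ)*((p:ℚ)+1) = (P:ℚ)*((P:ℚ)-3*(p:ℚ)-1) := by
        ring
      linarith
    have hBmul : (0:ℚ) ≤ ((P:ℚ)-1)*((q:ℚ)*((P:ℚ)-2*(p:ℚ)) - (P:ℚ)*((p:ℚ)+1) + 4*(p:ℚ)) :=
      mul_nonneg (by linarith) hB
    linarith
  constructor
  · rw [lt_div_iff₀ hden2]
    push_cast [Nat.cast_sub e1, Nat.cast_sub e2, Nat.cast_sub e3]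
    calc ((p:ℚ) - 1) * ((((q:ℚ)-1)*((P:ℚ)-1)*(P:ℚ) - 1) * (M:ℚ))
        = (((p:ℚ)-1) * (((q:ℚ)-1)*((P:ℚ)-1)*(P:ℚ) - 1)) * (M:ℚ) := by ring
      _ < ((p:ℚ)*((P:ℚ)-2)*((P:ℚ)-1)*((q:ℚ)-2)) * (M:ℚ) :=
          mul_lt_mul_of_pos_right claimB (by linarith)
      _ = 2*((P:ℚ)-2)*(((q:ℚ)-1)*((P:ℚ)-1)*(P:ℚ)) - ((P:ℚ)-1)*((P:ℚ)-2)*((P:ℚ)*(q:ℚ)) := by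
          rw [← hPMQ]; ring
  · rw [div_le_iff₀ hden2]
    push_cast [Nat.cast_sub e1, Nat.cast_sub e2, Nat.cast_sub e3]
    have hrhsA : (p:ℚ)*(((((q:ℚ)-1)*((P:ℚ)-1)*(P:ℚ)) - 1) * (M:ℚ))
        = ((((q:ℚ)-1)*((P:ℚ)-1)*(P:ℚ)) - 1) * (P:ℚ) := by
      rw [← hPMQ]; ring
    have hidA : ((((q:ℚ)-1)*((P:ℚ)-1)*(P:ℚ)) - 1)*(P:ℚ)
        - (2*((P:ℚ)-2)*(((q:ℚ)-1)*((P:ℚ)-1)*(P:ℚ)) - ((P:ℚ)-1)*((P:ℚ)-2)*((P:ℚ)*(q:ℚ)))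
        = (P:ℚ)*(((P:ℚ)-1)*((P:ℚ)+2*(q:ℚ)-4) - 1) := by ring
    have h2 : (6:ℚ)*17 ≤ ((P:ℚ)-1)*((P:ℚ)+2*(q:ℚ)-4) :=
      mul_le_mul (by linarith) (by linarith) (by linarith) (by linarith)
    have h1 : (0:ℚ) ≤ (P:ℚ)*(((P:ℚ)-1)*((P:ℚ)+2*(q:ℚ)-4) - 1) :=
      mul_nonneg (by linarith) (by linarith)
    linarith

theorem stmt19 (p m q : ℕ) (hp : p.Prime) (hm : 1 < m) (hq : IsPrimePow q)
    (hqp : p ^ m ≤ q) (hgcd : Nat.gcd (q - 1) p = 1) (hcond : 3 * p + 1 ≤ p ^ m) :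
    IsStrictlyOptimalFHSSet ((q - 1) * p * (p ^ m - 1)) (p ^ (m - 1)) p (p ^ m * q) := by
  have hp2 : 2 ≤ p := hp.two_le
  have hP7 : 7 ≤ p ^ m := le_trans (by omega) hcond
  have hq7 : 7 ≤ q := le_trans hP7 hqp
  constructor
  · exact FHSaux.peng_fan_eq p m q hp2 (by omega) hqp hcond
  set A := p ^ m - 1 with hA_def
  set Q1 := q - 1 with hQ1_def
  set D := A * Q1 with hD_def
  set M := p ^ (m - 1) with hM_def
  set N := Q1 * p * A with hN_def
  have hApos : 0 < A := by omega
  have hQ1pos : 0 < Q1 := by omega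
  have hDpos : 0 < D := Nat.mul_pos hApos hQ1pos
  have hND : N = D * p := by rw [hN_def, hD_def]; ring
  have hNpos : 0 < N := by rw [hND]; exact Nat.mul_pos hDpos (by omega)
  haveI : NeZero N := ⟨by omega⟩
  haveI : NeZero p := ⟨by omega⟩
  haveI : Fact p.Prime := ⟨hp⟩
  have hAdvdN : A ∣ N := ⟨Q1 * p, by rw [hN_def]; ring⟩
  have hAdvdD : A ∣ D := ⟨Q1, rfl⟩
  have hDdvdN : D ∣ N := ⟨p, hND⟩
  have hpdvdN : p ∣ N := ⟨D, by rw [hND]; ring⟩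
  have hPM : p * M = p ^ m := by
    rw [hM_def, ← pow_succ']
    congr 1
    omega
  have hcop : Nat.Coprime p D := by
    have h1 : Nat.Coprime p Q1 := Nat.coprime_comm.mp hgcd
    have h2 : Nat.Coprime p A := by
      rcases (Nat.coprime_or_dvd_of_prime hp A) with h | h
      · exact h
      · exfalso
        have hd : p ∣ p ^ m := dvd_pow_self p (by omega)
        have : p ∣ p ^ m - A := Nat.dvd_sub hd h
        rw [show p ^ m - A = 1 by omega] at this
        have := Nat.le_of_dvd one_pos this
        omega
    exact Nat.Coprime.mul_right h2 h1
  -- the two finite fields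
  obtain ⟨r, k, hrP, hkpos, hrk⟩ := hq
  haveI : Fact r.Prime := ⟨Nat.prime_iff.mpr hrP⟩
  set K₁ := GaloisField p m with hK₁def
  set K₂ := GaloisField r k with hK₂def
  have hcard₁ : Nat.card K₁ = p ^ m := GaloisField.card p m (by omega)
  have hcard₂ : Nat.card K₂ = q := by rw [hK₂def, GaloisField.card r k (by omega)]; exact hrk
  haveI : Fintype K₁ := Fintype.ofFinite _
  haveI : Fintype K₂ := Fintype.ofFinite _
  obtain ⟨g₁, hg₁⟩ : ∃ g : K₁ˣ, orderOf g = A := by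
    obtain ⟨g, hg⟩ := IsCyclic.exists_generator (α := K₁ˣ)
    exact ⟨g, by rw [orderOf_eq_card_of_forall_mem_zpowers hg, Nat.card_units, hcard₁]⟩
  obtain ⟨g₂, hg₂⟩ : ∃ g : K₂ˣ, orderOf g = Q1 := by
    obtain ⟨g, hg⟩ := IsCyclic.exists_generator (α := K₂ˣ)
    exact ⟨g, by rw [orderOf_eq_card_of_forall_mem_zpowers hg, Nat.card_units, hcard₂]⟩
  -- injection of Fin A into K₂
  obtain ⟨f, hf⟩ : ∃ f : Fin A → K₂, Function.Injective f := by
    have hle : Fintype.card (Fin A) ≤ Fintype.card K₂ := by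
      rw [Fintype.card_fin, ← Nat.card_eq_fintype_card, hcard₂]
      omega
    obtain ⟨f⟩ := Function.Embedding.nonempty_of_card_le hle
    exact ⟨f, f.injective⟩
  -- coset representatives of the prime field
  set ι := algebraMap (ZMod p) K₁ with hιdef
  have hιinj : Function.Injective ι := ι.injective
  set S : AddSubgroup K₁ := ι.toAddMonoidHom.range with hSdef
  have hmemS : ∀ v : ZMod p, ι v ∈ S := fun v => ⟨v, rfl⟩
  obtain ⟨e, he⟩ : ∃ e : Fin M → K₁, ∀ a b : Fin M, e a - e b ∈ S → a = b := by
    have hScard : Nat.card S = p := by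
      have h1 : (S : Set K₁) = Set.range ι := by
        ext x
        simp [hSdef, AddMonoidHom.mem_range]
      have h2 : Nat.card S = Nat.card (Set.range ⇑ι) := Nat.card_congr (Equiv.setCongr h1)
      rw [h2, Nat.card_range_of_injective hιinj, Nat.card_zmod]
    have hcards := AddSubgroup.card_eq_card_quotient_mul_card_addSubgroup S
    rw [hcard₁, hScard] at hcards
    have hQcard : Nat.card (K₁ ⧸ S) = M := by
      have hppos : 0 < p := by omega
      have h5 : Nat.card (K₁ ⧸ S) * p = M * p := by
        rw [← hcards, ← hPM, Nat.mul_comm]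
      exact Nat.eq_of_mul_eq_mul_right hppos h5
    haveI : Fintype (K₁ ⧸ S) := Fintype.ofFinite _
    have eqv : Fin M ≃ (K₁ ⧸ S) :=
      (Fintype.equivFinOfCardEq (by rw [← Nat.card_eq_fintype_card, hQcard])).symm
    refine ⟨fun a => (eqv a).out, fun a b hmem => ?_⟩
    have h2 : QuotientAddGroup.mk (eqv a).out = QuotientAddGroup.mk (s := S) (eqv b).out :=
      (QuotientAddGroup.eq_iff_sub_mem).mpr hmem
    rw [QuotientAddGroup.out_eq', QuotientAddGroup.out_eq'] at h2
    exact eqv.injective h2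
  -- the sequences
  set Y : Fin M → ZMod N → K₁ × K₂ := fun a t =>
    ( ((g₁ ^ (t.val % A) : K₁ˣ) : K₁) + e a + ι ((t.val : ZMod p)),
      ((g₂ ^ (t.val % D / A) : K₂ˣ) : K₂) + f ⟨t.val % A, Nat.mod_lt _ hApos⟩ ) with hYdef
  have hcardprod : Fintype.card (K₁ × K₂) = p ^ m * q := by
    rw [Fintype.card_prod, ← Nat.card_eq_fintype_card, ← Nat.card_eq_fintype_card,
      hcard₁, hcard₂]
  let Φ : (K₁ × K₂) ≃ Fin (p ^ m * q) := Fintype.equivFinOfCardEq hcardprod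
  set X : Fin M → ZMod N → Fin (p ^ m * q) := fun a t => Φ (Y a t) with hXdef
  -- first-coordinate equation
  have E1 : ∀ (a b : Fin M) (t τ : ZMod N), Y a t = Y b (t + τ) →
      ((g₁ ^ (t.val % A) : K₁ˣ) : K₁) * (1 - ((g₁ ^ (τ.val % A) : K₁ˣ) : K₁))
        = e b - e a + ι ((τ.val : ZMod p)) := by
    intro a b t τ h
    have h1 := congrArg Prod.fst h
    simp only [hYdef] at h1
    rw [ZMod.val_add] at h1
    rw [Nat.mod_mod_of_dvd _ hAdvdN] at h1
    rw [FHSaux.natCast_mod_dvd p N _ hpdvdN] at h1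
    rw [Nat.cast_add, map_add] at h1
    have hsplit : (g₁ ^ ((t.val + τ.val) % A) : K₁ˣ) = g₁ ^ (t.val % A) * g₁ ^ (τ.val % A) := by
      rw [← pow_add]
      refine pow_eq_pow_iff_modEq.mpr ?_
      rw [hg₁]
      show (t.val + τ.val) % A % A = (t.val % A + τ.val % A) % A
      rw [Nat.mod_mod_of_dvd _ (dvd_refl A), Nat.add_mod]
    rw [hsplit, Units.val_mul] at h1
    linear_combination h1
  -- second-coordinate equation
  have E2 : ∀ (a b : Fin M) (t τ : ZMod N), Y a t = Y b (t + τ) →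
      ((g₂ ^ (t.val % D / A) : K₂ˣ) : K₂) *
        (1 - ((g₂ ^ (τ.val % D / A + (if A ≤ t.val % A + τ.val % A then 1 else 0)) : K₂ˣ) : K₂))
        = f ⟨(t.val + τ.val) % A, Nat.mod_lt _ hApos⟩ - f ⟨t.val % A, Nat.mod_lt _ hApos⟩ := by
    intro a b t τ h
    have h2 := congrArg Prod.snd h
    simp only [hYdef] at h2
    simp only [ZMod.val_add] at h2
    simp only [Nat.mod_mod_of_dvd _ hDdvdN, Nat.mod_mod_of_dvd _ hAdvdN] at h2
    have hsplit : (g₂ ^ ((t.val + τ.val) % D / A) : K₂ˣ)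
        = g₂ ^ (t.val % D / A) *
          g₂ ^ (τ.val % D / A + (if A ≤ t.val % A + τ.val % A then 1 else 0)) := by
      rw [← pow_add]
      refine pow_eq_pow_iff_modEq.mpr ?_
      rw [hg₂]
      have hs := FHSaux.slice_mod A Q1 (t.val % D) (τ.val % D) hApos
        (by rw [← hD_def]; exact Nat.mod_lt _ hDpos)
        (by rw [← hD_def]; exact Nat.mod_lt _ hDpos)
      rw [← hD_def, ← Nat.add_mod] at hs
      rw [Nat.mod_mod_of_dvd _ hAdvdD, Nat.mod_mod_of_dvd _ hAdvdD, Nat.add_assoc] at hs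
      exact hs
    rw [hsplit, Units.val_mul] at h2
    linear_combination h2
  -- a hit with shift divisible by A forces triviality
  have HIT1 : ∀ (a b : Fin M) (t τ : ZMod N), Y a t = Y b (t + τ) →
      τ.val % A = 0 → a = b ∧ τ = 0 := by
    intro a b t τ h hτA
    have e1 := E1 a b t τ h
    rw [hτA, pow_zero] at e1
    simp only [Units.val_one, sub_self, mul_zero] at e1
    have hmem : e b - e a ∈ S := by
      have h3 : e b - e a = -(ι ((τ.val : ZMod p))) := by linear_combination -e1
      rw [h3]
      exact neg_mem (hmemS _)
    have hab : b = a := he b a hmem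
    rw [hab] at e1
    have hv : ((τ.val : ZMod p)) = 0 := by
      apply hιinj
      rw [map_zero]
      linear_combination -e1
    have e2 := E2 a b t τ h
    have h3 : t.val % A < A := Nat.mod_lt _ hApos
    have hε : (if A ≤ t.val % A + τ.val % A then 1 else 0) = 0 := by
      rw [hτA, Nat.add_zero, if_neg (by omega)]
    have hidx : (t.val + τ.val) % A = t.val % A := by
      rw [Nat.add_mod, hτA, Nat.add_zero, Nat.mod_mod_of_dvd _ (dvd_refl A)]
    simp only [hidx, hε, Nat.add_zero] at e2
    have e2' : ((g₂ ^ (t.val % D / A) : K₂ˣ) : K₂) * (1 - ((g₂ ^ (τ.val % D / A) : K₂ˣ) : K₂))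
        = 0 := by rw [e2, sub_self]
    have hne : ((g₂ ^ (t.val % D / A) : K₂ˣ) : K₂) ≠ 0 := Units.ne_zero _
    have h4 : (1 : K₂) - ((g₂ ^ (τ.val % D / A) : K₂ˣ) : K₂) = 0 := by
      rcases mul_eq_zero.mp e2' with h' | h'
      · exact absurd h' hne
      · exact h'
    have h5 : (g₂ ^ (τ.val % D / A) : K₂ˣ) = 1 :=
      Units.val_eq_one.mp (sub_eq_zero.mp h4).symm
    have h6 : Q1 ∣ τ.val % D / A := by
      have h6' := orderOf_dvd_of_pow_eq_one h5
      rwa [hg₂] at h6'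
    have h7 : τ.val % D / A < Q1 := by
      rw [Nat.div_lt_iff_lt_mul hApos]
      calc τ.val % D < D := Nat.mod_lt _ hDpos
        _ = Q1 * A := by rw [hD_def, Nat.mul_comm]
    have h8 : τ.val % D / A = 0 := Nat.eq_zero_of_dvd_of_lt h6 h7
    have h9 : τ.val % D = 0 := by
      have h10 := Nat.div_add_mod (τ.val % D) A
      rw [h8, Nat.mul_zero, Nat.zero_add, Nat.mod_mod_of_dvd _ hAdvdD, hτA] at h10
      exact h10.symm
    have hDdvd : D ∣ τ.val := Nat.dvd_of_mod_eq_zero h9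
    have hpdvd : p ∣ τ.val := (ZMod.natCast_eq_zero_iff _ _).mp hv
    have hNdvd : N ∣ τ.val := by
      have h11 := Nat.Coprime.mul_dvd_of_dvd_of_dvd hcop hpdvd hDdvd
      exact (dvd_of_eq (by rw [hND, Nat.mul_comm])).trans h11
    have hτ0 : τ = 0 := by
      have h12 : τ.val = 0 := by
        rcases Nat.eq_zero_or_pos τ.val with h' | h'
        · exact h'
        · exact absurd (Nat.le_of_dvd h' hNdvd) (by have := ZMod.val_lt τ; omega)
      exact (ZMod.val_eq_zero τ).mp h12
    exact ⟨hab.symm, hτ0⟩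
  -- two hits with the same nontrivial shift are congruent mod D
  have HIT2 : ∀ (a b : Fin M) (t t' τ : ZMod N), Y a t = Y b (t + τ) →
      Y a t' = Y b (t' + τ) → τ.val % A ≠ 0 → t.val % D = t'.val % D := by
    intro a b t t' τ h h' hτA
    have e1 := E1 a b t τ h
    have e1' := E1 a b t' τ h'
    have hτAlt : τ.val % A < A := Nat.mod_lt _ hApos
    have hne1 : ((g₁ ^ (τ.val % A) : K₁ˣ) : K₁) ≠ 1 := by
      intro hone
      have h2 : (g₁ ^ (τ.val % A) : K₁ˣ) = 1 := Units.val_eq_one.mp hone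
      have h3 : A ∣ τ.val % A := by
        have h3' := orderOf_dvd_of_pow_eq_one h2
        rwa [hg₁] at h3'
      exact hτA (Nat.eq_zero_of_dvd_of_lt h3 hτAlt)
    have hsub1 : (1 : K₁) - ((g₁ ^ (τ.val % A) : K₁ˣ) : K₁) ≠ 0 :=
      sub_ne_zero.mpr (Ne.symm hne1)
    have hcc : t.val % A = t'.val % A := by
      have h2 := mul_right_cancel₀ hsub1 (e1.trans e1'.symm)
      have h3 : (g₁ ^ (t.val % A) : K₁ˣ) = g₁ ^ (t'.val % A) := Units.ext h2
      have h4 := pow_eq_pow_iff_modEq.mp h3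
      rw [hg₁] at h4
      exact FHSaux.modeq_eq _ _ _ h4 (Nat.mod_lt _ hApos) (Nat.mod_lt _ hApos)
    have hidx : (t.val + τ.val) % A ≠ t.val % A := by
      intro heq
      have h2 : t.val + τ.val ≡ t.val + 0 [MOD A] := by rwa [Nat.add_zero]
      have h3 := Nat.ModEq.add_left_cancel' t.val h2
      have h4 : A ∣ τ.val := (Nat.modEq_zero_iff_dvd).mp h3
      exact hτA (Nat.mod_eq_zero_of_dvd h4)
    have hfidx : (t.val + τ.val) % A = (t'.val + τ.val) % A := by
      rw [Nat.add_mod, hcc, ← Nat.add_mod]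
    have e2 := E2 a b t τ h
    have e2' := E2 a b t' τ h'
    simp only [← hfidx, ← hcc] at e2'
    have hRHSne : f ⟨(t.val + τ.val) % A, Nat.mod_lt _ hApos⟩
        - f ⟨t.val % A, Nat.mod_lt _ hApos⟩ ≠ 0 := by
      refine sub_ne_zero.mpr ?_
      intro hfeq
      exact hidx (congrArg Fin.val (hf hfeq))
    have hsub2 : (1 : K₂) -
        ((g₂ ^ (τ.val % D / A + (if A ≤ t.val % A + τ.val % A then 1 else 0)) : K₂ˣ) : K₂) ≠ 0 := by
      intro hzero
      rw [hzero, mul_zero] at e2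
      exact hRHSne e2.symm
    have h2 := mul_right_cancel₀ hsub2 (e2.trans e2'.symm)
    have h3 : (g₂ ^ (t.val % D / A) : K₂ˣ) = g₂ ^ (t'.val % D / A) := Units.ext h2
    have h4 := pow_eq_pow_iff_modEq.mp h3
    rw [hg₂] at h4
    have hltQ : ∀ z : ZMod N, z.val % D / A < Q1 := by
      intro z
      rw [Nat.div_lt_iff_lt_mul hApos]
      calc z.val % D < D := Nat.mod_lt _ hDpos
        _ = Q1 * A := by rw [hD_def, Nat.mul_comm]
    have hss : t.val % D / A = t'.val % D / A :=
      FHSaux.modeq_eq _ _ _ h4 (hltQ t) (hltQ t')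
    have d1 := Nat.div_add_mod (t.val % D) A
    have d2 := Nat.div_add_mod (t'.val % D) A
    rw [Nat.mod_mod_of_dvd _ hAdvdD] at d1 d2
    simp only [hss, hcc] at d1
    exact d1.symm.trans d2
  -- the main counting bound
  have BOUND : ∀ (a b : Fin M) (τ j : ZMod N), ¬(a = b ∧ τ = 0) → ∀ L : ℕ, 1 ≤ L → L ≤ N →
      (partialHC (X a) (X b) τ j L : ℤ) ≤ ⌈((L * p : ℕ) : ℚ) / (N : ℚ)⌉ := by
    intro a b τ j hnt L hL hLN
    have hceil : ((D * p : ℕ) : ℚ) = (N : ℚ) := by rw [← hND]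
    have hsum : partialHC (X a) (X b) τ j L
        = ((Finset.range L).filter
            (fun t : ℕ => X a (j + (t : ZMod N)) = X b (j + (t : ZMod N) + τ))).card := by
      rw [partialHC, Finset.sum_boole, Nat.cast_id]
    set s := (Finset.range L).filter
        (fun t : ℕ => X a (j + (t : ZMod N)) = X b (j + (t : ZMod N) + τ)) with hsdef
    rcases s.eq_empty_or_nonempty with hs | ⟨t₀, ht₀⟩
    · rw [hsum, hs]
      simp only [Finset.card_empty, Nat.cast_zero]
      apply Int.ceil_nonneg
      positivity
    · have hhit : ∀ t ∈ s, Y a (j + (t : ZMod N)) = Y b ((j + (t : ZMod N)) + τ) := by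
        intro t ht
        rw [hsdef, Finset.mem_filter] at ht
        exact Φ.injective ht.2
      have hτA : τ.val % A ≠ 0 := by
        intro h0
        exact hnt (HIT1 a b (j + (t₀ : ZMod N)) τ (hhit t₀ ht₀) h0)
      have hv : ∀ u : ℕ, u < N → ((j + (u : ZMod N)).val) % D = (j.val + u) % D := by
        intro u hu
        rw [ZMod.val_add, ZMod.val_natCast, Nat.mod_eq_of_lt hu, Nat.mod_mod_of_dvd _ hDdvdN]
      have hsubset : s ⊆ (Finset.range L).filter (fun t => t % D = t₀ % D) := by
        intro t ht
        have htL : t < L := Finset.mem_range.mp (Finset.mem_filter.mp (hsdef ▸ ht)).1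
        have ht₀L : t₀ < L := Finset.mem_range.mp (Finset.mem_filter.mp (hsdef ▸ ht₀)).1
        have h1 := HIT2 a b (j + (t : ZMod N)) (j + (t₀ : ZMod N)) τ
          (hhit t ht) (hhit t₀ ht₀) hτA
        rw [hv t (lt_of_lt_of_le htL hLN), hv t₀ (lt_of_lt_of_le ht₀L hLN)] at h1
        have h2 : t % D = t₀ % D := Nat.ModEq.add_left_cancel' j.val h1
        rw [Finset.mem_filter, Finset.mem_range]
        exact ⟨htL, h2⟩
      have hcard : s.card ≤ (L-1)/D + 1 :=
        le_trans (Finset.card_le_card hsubset) (FHSaux.count_filter_mod D L (t₀ % D))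
      calc (partialHC (X a) (X b) τ j L : ℤ) = (s.card : ℤ) := by rw [hsum]
        _ ≤ (((L-1)/D + 1 : ℕ) : ℤ) := by exact_mod_cast hcard
        _ ≤ ⌈((L * p : ℕ) : ℚ) / (N : ℚ)⌉ := by
            have hcb := FHSaux.ceil_bound D L p hDpos (by omega) hL
            rwa [hceil] at hcb
  refine ⟨X, ?_, ?_⟩
  · -- distinctness
    intro a b hab hXeq
    have h0 : Y a 0 = Y b (0 + 0) := by
      rw [add_zero]
      have := congrFun hXeq 0
      exact Φ.injective this
    exact hab (HIT1 a b 0 0 h0 (by simp [ZMod.val_zero, Nat.zero_mod])).1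
  · intro L hL hLn
    constructor
    · intro a τ hτ j
      exact BOUND a a τ j (fun h => hτ h.2) L hL hLn
    · intro a b hab τ j
      exact BOUND a b τ j (fun h => hab h.1) L hL hLn
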